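/- For all u ∈ (0,1): 4u/(4+u²) > arctan u > u(2+u²)/(2+2u²). -/

import Mathlib

open Real Set

private lemma hasDerivAt_glem (x : ℝ) :
    HasDerivAt (fun x : ℝ => Real.arctan x - x * (2 + x ^ 2) / (2 + 2 * x ^ 2))
      (1 / (1 + x ^ 2) -
        ((2 + 3 * x ^ 2) * (2 + 2 * x ^ 2) - x * (2 + x ^ 2) * (4 * x)) / (2 + 2 * x ^ 2) ^ 2) x := by
  have hd : (2 + 2 * x ^ 2) ≠ 0 := by positivity
  have h1 : HasDerivAt (fun x : ℝ => x * (2 + x ^ 2)) (2 + 3 * x ^ 2) x := by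
    have := (hasDerivAt_id x).mul ((hasDerivAt_const x (2:ℝ)).add (hasDerivAt_pow 2 x))
    refine this.congr_deriv ?_
    simp; ring
  have h2 : HasDerivAt (fun x : ℝ => 2 + 2 * x ^ 2) (4 * x) x := by
    have := (hasDerivAt_const x (2:ℝ)).add ((hasDerivAt_pow 2 x).const_mul 2)
    refine this.congr_deriv ?_; simp; ring
  exact (Real.hasDerivAt_arctan x).sub (h1.div h2 hd)

private lemma hasDerivAt_hlem (x : ℝ) :
    HasDerivAt (fun x : ℝ => 4 * x / (4 + x ^ 2) - Real.arctan x)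
      ((4 * (4 + x ^ 2) - 4 * x * (2 * x)) / (4 + x ^ 2) ^ 2 - 1 / (1 + x ^ 2)) x := by
  have hd : (4 + x ^ 2) ≠ 0 := by positivity
  have h1 : HasDerivAt (fun x : ℝ => 4 * x) (4 : ℝ) x := by
    have := (hasDerivAt_id x).const_mul (4:ℝ)
    refine this.congr_deriv ?_; ring
  have h2 : HasDerivAt (fun x : ℝ => 4 + x ^ 2) (2 * x) x := by
    have := (hasDerivAt_const x (4:ℝ)).add (hasDerivAt_pow 2 x)
    refine this.congr_deriv ?_; simp
  exact (h1.div h2 hd).sub (Real.hasDerivAt_arctan x)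

theorem stmt_16 :
    ∀ u ∈ Set.Ioo (0:ℝ) 1,
      u * (2 + u ^ 2) / (2 + 2 * u ^ 2) < Real.arctan u ∧
      Real.arctan u < 4 * u / (4 + u ^ 2) := by
  intro u hu
  obtain ⟨hu0, hu1⟩ := hu
  constructor
  · -- lower bound
    set g : ℝ → ℝ := fun x => Real.arctan x - x * (2 + x ^ 2) / (2 + 2 * x ^ 2) with hg
    have hmono : StrictMonoOn g (Icc (0:ℝ) 1) := by
      apply strictMonoOn_of_deriv_pos (convex_Icc 0 1)
      · exact fun x _ => ((hasDerivAt_glem x).continuousAt).continuousWithinAt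
      · intro x hx
        rw [interior_Icc] at hx
        obtain ⟨hx0, hx1⟩ := hx
        rw [(hasDerivAt_glem x).deriv]
        rw [sub_pos, div_lt_div_iff₀ (by positivity) (by positivity)]
        nlinarith [sq_nonneg x, sq_nonneg (x^2), mul_pos hx0 hx0, sq_nonneg (1 - x^2),
          mul_pos (mul_pos hx0 hx0) (sub_pos.mpr (show x^2 < 1 by nlinarith))]
    have h0 : g 0 = 0 := by simp [hg]
    have := hmono (by constructor <;> norm_num) ⟨le_of_lt hu0, le_of_lt hu1⟩ hu0
    rw [h0] at this
    simpa [hg, sub_pos] using this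
  · -- upper bound
    set h : ℝ → ℝ := fun x => 4 * x / (4 + x ^ 2) - Real.arctan x with hh
    have goal : 0 < h u → Real.arctan u < 4 * u / (4 + u ^ 2) := by
      intro hpos; simpa [hh, sub_pos] using hpos
    apply goal
    set c : ℝ := 2 / Real.sqrt 5 with hc
    have hs5 : (0:ℝ) < Real.sqrt 5 := Real.sqrt_pos.mpr (by norm_num)
    have hs5sq : Real.sqrt 5 ^ 2 = 5 := Real.sq_sqrt (by norm_num)
    have hc0 : 0 < c := by positivity
    have hc1 : c < 1 := by
      rw [hc, div_lt_one hs5]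
      nlinarith [hs5]
    have hcsq : c ^ 2 = 4 / 5 := by
      rw [hc, div_pow, hs5sq]; norm_num
    have hmono : StrictMonoOn h (Icc (0:ℝ) c) := by
      apply strictMonoOn_of_deriv_pos (convex_Icc 0 c)
      · exact fun x _ => ((hasDerivAt_hlem x).continuousAt).continuousWithinAt
      · intro x hx
        rw [interior_Icc] at hx
        obtain ⟨hx0, hxc⟩ := hx
        have hx2 : x ^ 2 < 4 / 5 := by
          rw [← hcsq]
          exact pow_lt_pow_left₀ hxc (le_of_lt hx0) (by norm_num) |>.trans_le le_rfl
        rw [(hasDerivAt_hlem x).deriv]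
        rw [sub_pos, div_lt_div_iff₀ (by positivity) (by positivity)]
        nlinarith [mul_pos hx0 hx0, sq_nonneg x]
    have hanti : StrictAntiOn h (Icc c 1) := by
      apply strictAntiOn_of_deriv_neg (convex_Icc c 1)
      · exact fun x _ => ((hasDerivAt_hlem x).continuousAt).continuousWithinAt
      · intro x hx
        rw [interior_Icc] at hx
        obtain ⟨hxc, hx1⟩ := hx
        have hx0 : 0 < x := lt_trans hc0 hxc
        have hx2 : 4 / 5 < x ^ 2 := by
          rw [← hcsq]
          exact pow_lt_pow_left₀ hxc (le_of_lt hc0) (by norm_num)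
        rw [(hasDerivAt_hlem x).deriv]
        rw [sub_neg, div_lt_div_iff₀ (by positivity) (by positivity)]
        nlinarith [mul_pos hx0 hx0, sq_nonneg x]
    have h0 : h 0 = 0 := by simp [hh]
    have h1pos : 0 < h 1 := by
      have hpi : Real.pi < 3.15 := Real.pi_lt_d2
      simp only [hh]
      rw [Real.arctan_one]
      norm_num
      nlinarith
    rcases le_or_gt u c with huc | huc
    · have := hmono (by constructor <;> [exact le_rfl; exact le_of_lt hc0]) ⟨le_of_lt hu0, huc⟩ hu0
      rw [h0] at this; exact this
    · have := hanti ⟨huc.le, hu1.le⟩ ⟨hc1.le, le_rfl⟩ hu1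
      exact lt_trans h1pos this
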